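/- In the polynomial ring ℂ[ℓ,w], the radical of the ideal J generated by w·(w − ℓ²) and ℓ³·w equals the principal ideal ⟨w⟩, and ⟨w⟩ is a prime ideal of ℂ[ℓ,w]. Consequently the nilradical of R = ℂ[ℓ,w]/J is the ideal generated by the image of w, this nilradical is prime, and Spec R is irreducible. -/

import Mathlib

open MvPolynomial

noncomputable section

/-- The polynomial ring `ℂ[ℓ,w]` in two variables: `X 0 = ℓ`, `X 1 = w`. -/
abbrev R2 : Type := MvPolynomial (Fin 2) ℂ

/-- `ℓ` -/
def l : R2 := X 0

/-- `w` -/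
def w : R2 := X 1

/-- The ideal `J = ⟨w(w − ℓ²), ℓ³w⟩`. -/
def J : Ideal R2 := Ideal.span {w * (w - l ^ 2), l ^ 3 * w}

lemma prime_w : Prime w := by
  rw [← MulEquiv.prime_iff ((renameEquiv ℂ (Equiv.swap (0 : Fin 2) 1)).trans
      (finSuccEquiv ℂ 1)).toMulEquiv]
  have h : ((renameEquiv ℂ (Equiv.swap (0 : Fin 2) 1)).trans
      (finSuccEquiv ℂ 1)).toMulEquiv w = Polynomial.X := by
    simp [w, renameEquiv_apply, finSuccEquiv_X_zero]
  rw [h]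
  exact Polynomial.prime_X

lemma span_w_prime : (Ideal.span {w} : Ideal R2).IsPrime :=
  (Ideal.span_singleton_prime prime_w.ne_zero).mpr prime_w

lemma J_le_span_w : J ≤ Ideal.span {w} := by
  rw [J, Ideal.span_le]
  rintro x (rfl | rfl)
  · exact Ideal.mem_span_singleton.mpr (dvd_mul_right w (w - l ^ 2))
  · exact Ideal.mem_span_singleton.mpr (dvd_mul_left w (l ^ 3))

lemma w_mem_radical_J : w ∈ J.radical :=
  ⟨4, Ideal.mem_span_pair.mpr ⟨w ^ 2 + l ^ 2 * w + l ^ 4, l ^ 3, by ring⟩⟩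

lemma radical_J : J.radical = Ideal.span {w} := by
  refine le_antisymm ?_ ?_
  · rw [← span_w_prime.radical]
    exact Ideal.radical_mono J_le_span_w
  · rw [Ideal.span_le, Set.singleton_subset_iff]
    exact w_mem_radical_J

lemma nilradical_quot : nilradical (R2 ⧸ J) = Ideal.span {Ideal.Quotient.mk J w} := by
  have h := Ideal.map_radical_of_surjective (f := Ideal.Quotient.mk J)
    Ideal.Quotient.mk_surjective (le_of_eq Ideal.mk_ker)
  rw [Ideal.map_quotient_self] at h
  have : nilradical (R2 ⧸ J) = (⊥ : Ideal (R2 ⧸ J)).radical := rfl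
  rw [this, ← h, radical_J, Ideal.map_span, Set.image_singleton]

lemma nilradical_prime : (nilradical (R2 ⧸ J)).IsPrime := by
  rw [nilradical_quot, ← Set.image_singleton, ← Ideal.map_span]
  exact Ideal.map_isPrime_of_surjective (H := span_w_prime)
    Ideal.Quotient.mk_surjective (Ideal.mk_ker.le.trans J_le_span_w)

/-- The radical of `J` is the prime ideal `⟨w⟩`; consequently the nilradical of
`R = ℂ[ℓ,w]/J` is generated by the image of `w`, it is prime, and `Spec R` is irreducible. -/
theorem radical_J_eq_span_w :
    J.radical = Ideal.span {w} ∧ (Ideal.span {w} : Ideal R2).IsPrime ∧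
      nilradical (R2 ⧸ J) = Ideal.span {Ideal.Quotient.mk J w} ∧
      (nilradical (R2 ⧸ J)).IsPrime ∧
      IrreducibleSpace (PrimeSpectrum (R2 ⧸ J)) := by
  refine ⟨radical_J, span_w_prime, nilradical_quot, nilradical_prime, ?_⟩
  rw [irreducibleSpace_def, Set.top_eq_univ, ← PrimeSpectrum.zeroLocus_bot,
    PrimeSpectrum.isIrreducible_zeroLocus_iff]
  exact nilradical_prime
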